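/- If a finite set A of nonnegative integers tiles the integers, then A(1) = ∏_{s∈S_A} Φ_s(1), i.e., #A equals the product over all prime powers s with Φ_s | A(x) of the prime of which s is a power. -/

import Mathlib

open Polynomial

/-- The polynomial `∑_{a ∈ A} x^a` of a finite set of nonnegative integers. -/
noncomputable def setPoly (A : Finset ℕ) : Polynomial ℤ :=
  ∑ a ∈ A, X ^ a

/-- A finite set of nonnegative integers tiles the integers. -/
def Tiles (A : Finset ℕ) : Prop :=
  ∃ C : Set ℤ, ∀ z : ℤ, ∃! p : ℕ × ℤ, p.1 ∈ A ∧ p.2 ∈ C ∧ (p.1 : ℤ) + p.2 = z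

lemma cycl_prime {s : ℕ} (hs : IsPrimePow s) : Prime (cyclotomic s ℤ) :=
  UniqueFactorizationMonoid.irreducible_iff_prime.mp (cyclotomic.irreducible hs.pos)

lemma cyclo_prod_dvd (S : Finset ℕ) (P : Polynomial ℤ) (hpp : ∀ s ∈ S, IsPrimePow s)
    (hdvd : ∀ s ∈ S, cyclotomic s ℤ ∣ P) : (∏ s ∈ S, cyclotomic s ℤ) ∣ P := by
  classical
  induction S using Finset.induction_on with
  | empty => simp
  | @insert a s hs ih =>
    have hprod : (∏ t ∈ s, cyclotomic t ℤ) ∣ P :=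
      ih (fun t ht => hpp t (Finset.mem_insert_of_mem ht))
        (fun t ht => hdvd t (Finset.mem_insert_of_mem ht))
    obtain ⟨g, hg⟩ := hprod
    have hpa : Prime (cyclotomic a ℤ) := cycl_prime (hpp a (Finset.mem_insert_self a s))
    have hdvda : cyclotomic a ℤ ∣ (∏ t ∈ s, cyclotomic t ℤ) * g := hg ▸ hdvd a (Finset.mem_insert_self a s)
    have : cyclotomic a ℤ ∣ g := by
      rcases hpa.dvd_mul.mp hdvda with h | h
      · exfalso
        obtain ⟨t, ht, hdt⟩ := hpa.exists_mem_finset_dvd h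
        have : cyclotomic a ℤ = cyclotomic t ℤ :=
          eq_of_monic_of_associated (cyclotomic.monic a ℤ) (cyclotomic.monic t ℤ)
            (hpa.irreducible.associated_of_dvd
              (cycl_prime (hpp t (Finset.mem_insert_of_mem ht))).irreducible hdt)
        exact hs (cyclotomic_injective this ▸ ht)
      · exact h
    obtain ⟨g', hg'⟩ := this
    rw [Finset.prod_insert hs, hg, hg', mul_comm (cyclotomic a ℤ)]
    exact ⟨g', by ring⟩

lemma eval_one_setPoly (B : Finset ℕ) : (setPoly B).eval 1 = (B.card : ℤ) := by
  simp [setPoly, eval_finset_sum]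

lemma eval_one_primePow_pos {s : ℕ} (hs : IsPrimePow s) : 0 < (cyclotomic s ℤ).eval 1 := by
  obtain ⟨p, k, hp, hk, rfl⟩ := hs
  haveI : Fact p.Prime := ⟨hp.nat_prime⟩
  obtain ⟨k, rfl⟩ := Nat.exists_eq_succ_of_ne_zero hk.ne'
  rw [eval_one_cyclotomic_prime_pow]
  exact_mod_cast (Fact.out : p.Prime).pos

lemma exists_modular (A : Finset ℕ) (hA : Tiles A) :
    ∃ (n : ℕ) (D : Finset ℕ), 0 < n ∧
      ∀ r ∈ Finset.range n, ∃! q : ℕ × ℕ, (q ∈ A ×ˢ D) ∧ (q.1 + q.2) % n = r := by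
  classical
  obtain ⟨C, htile⟩ := hA
  obtain ⟨p0, ⟨hp0A, -, -⟩, -⟩ := htile 0
  have hne : A.Nonempty := ⟨p0.1, hp0A⟩
  set m := A.min' hne with hm
  set M := A.max' hne with hMdef
  set L := M - m with hL
  have hmM : m ≤ M := A.min'_le _ (A.max'_mem hne)
  have hLM : L ≤ M := Nat.sub_le _ _
  have hLc : (L : ℤ) = (M : ℤ) - (m : ℤ) := by
    rw [hL]; push_cast [Nat.cast_sub hmM]; ring
  -- membership of the left end of a window is determined by the rest
  have lemB : ∀ t : ℤ, t ∈ C ↔ ∀ j ∈ Finset.Icc 1 L, ¬((t + (j : ℤ)) ∈ C ∧ (M - j) ∈ A) := by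
    intro t
    obtain ⟨p, hp, hu⟩ := htile (t + M)
    constructor
    · rintro ht j hj ⟨hc, ha⟩
      simp only [Finset.mem_Icc] at hj
      have hjM : j ≤ M := hj.2.trans hLM
      have e1 : ((M, t) : ℕ × ℤ) = p := hu _ ⟨A.max'_mem hne, ht, by ring⟩
      have e2 : ((M - j, t + (j : ℤ)) : ℕ × ℤ) = p := hu _ ⟨ha, hc, by
        rw [Nat.cast_sub hjM]; ring⟩
      have := e1.trans e2.symm
      have h2 : t = t + (j : ℤ) := congrArg Prod.snd this
      omega
    · intro hno
      obtain ⟨a, c⟩ := p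
      obtain ⟨ha, hc, hsum⟩ := hp
      have ham : m ≤ a := A.min'_le _ ha
      have haM : a ≤ M := A.le_max' _ ha
      rcases eq_or_lt_of_le haM with heq | hlt
      · -- a = M, so c = t
        subst heq
        have : c = t := by push_cast at hsum; omega
        exact this ▸ hc
      · exfalso
        refine hno (M - a) ?_ ⟨?_, ?_⟩
        · simp only [Finset.mem_Icc]; omega
        · have e : t + ((M - a : ℕ) : ℤ) = c := by push_cast at hsum ⊢; omega
          rw [e]; exact hc
        · rw [show M - (M - a) = a by omega]; exact ha
  -- membership of the right end of a window is determined by the rest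
  have lemF : ∀ t : ℤ, (t + (L : ℤ)) ∈ C ↔
      ∀ j ∈ Finset.Icc 1 L, ¬((t + (L : ℤ) - (j : ℤ)) ∈ C ∧ (m + j) ∈ A) := by
    intro t
    obtain ⟨p, hp, hu⟩ := htile (t + L + m)
    constructor
    · rintro ht j hj ⟨hc, ha⟩
      simp only [Finset.mem_Icc] at hj
      have e1 : ((m, t + (L : ℤ)) : ℕ × ℤ) = p := hu _ ⟨A.min'_mem hne, ht, by ring⟩
      have e2 : ((m + j, t + (L : ℤ) - (j : ℤ)) : ℕ × ℤ) = p := hu _ ⟨ha, hc, by push_cast; ring⟩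
      have := e1.trans e2.symm
      have h2 : t + (L : ℤ) = t + (L : ℤ) - (j : ℤ) := congrArg Prod.snd this
      omega
    · intro hno
      obtain ⟨a, c⟩ := p
      obtain ⟨ha, hc, hsum⟩ := hp
      have ham : m ≤ a := A.min'_le _ ha
      have haM : a ≤ M := A.le_max' _ ha
      rcases eq_or_lt_of_le ham with heq | hlt
      · have : c = t + (L : ℤ) := by rw [← heq] at hsum; push_cast at hsum; omega
        exact this ▸ hc
      · exfalso
        refine hno (a - m) ?_ ⟨?_, ?_⟩
        · simp only [Finset.mem_Icc]; omega
        · have e : t + (L : ℤ) - ((a - m : ℕ) : ℤ) = c := by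
            push_cast at hsum ⊢; omega
          rw [e]; exact hc
        · rw [show m + (a - m) = a by omega]; exact ha
  -- pigeonhole: two equal windows
  obtain ⟨u1, u2, hu12, hwin⟩ : ∃ u1 u2 : ℕ, u1 < u2 ∧
      ∀ j : ℕ, j ≤ L → (((u1 : ℤ) + j) ∈ C ↔ ((u2 : ℤ) + j) ∈ C) := by
    have hcard : (Finset.univ : Finset (Finset (Fin (L + 1)))).card <
        (Finset.range (2 ^ (L + 1) + 1)).card := by
      simp [Finset.card_univ, Fintype.card_finset]
    obtain ⟨t1, ht1, t2, ht2, hne12, hf⟩ :=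
      Finset.exists_ne_map_eq_of_card_lt_of_maps_to hcard
        (f := fun t => Finset.univ.filter (fun i : Fin (L + 1) => ((t : ℤ) + (i : ℕ)) ∈ C))
        (fun a _ => Finset.mem_univ _)
    have key : ∀ j : ℕ, j ≤ L → (((t1 : ℤ) + j) ∈ C ↔ ((t2 : ℤ) + j) ∈ C) := by
      intro j hj
      have := Finset.ext_iff.mp hf ⟨j, by omega⟩
      simpa [Finset.mem_filter] using this
    rcases hne12.lt_or_gt with h12 | h12
    · exact ⟨t1, t2, h12, key⟩
    · exact ⟨t2, t1, h12, fun j hj => (key j hj).symm⟩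
  set n := u2 - u1 with hn
  have hnpos : 0 < n := by omega
  have hnc : (n : ℤ) = (u2 : ℤ) - (u1 : ℤ) := by rw [hn]; push_cast [Nat.cast_sub hu12.le]; ring
  -- window equality propagates
  have stepF : ∀ t t' : ℤ, (∀ j : ℕ, j ≤ L → ((t + j) ∈ C ↔ (t' + j) ∈ C)) →
      ∀ j : ℕ, j ≤ L → ((t + 1 + j) ∈ C ↔ (t' + 1 + j) ∈ C) := by
    intro t t' hq j hj
    rcases lt_or_eq_of_le hj with hjL | rfl
    · have e1 : t + 1 + (j : ℤ) = t + ((j + 1 : ℕ) : ℤ) := by omega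
      have e2 : t' + 1 + (j : ℤ) = t' + ((j + 1 : ℕ) : ℤ) := by omega
      rw [e1, e2]; exact hq (j + 1) (by omega)
    · have key : ∀ j' ∈ Finset.Icc 1 L,
          ((t + 1 + (L : ℤ) - (j' : ℤ)) ∈ C ↔ (t' + 1 + (L : ℤ) - (j' : ℤ)) ∈ C) := by
        intro j' hj'
        simp only [Finset.mem_Icc] at hj'
        have e1 : t + 1 + (L : ℤ) - (j' : ℤ) = t + ((L + 1 - j' : ℕ) : ℤ) := by omega
        have e2 : t' + 1 + (L : ℤ) - (j' : ℤ) = t' + ((L + 1 - j' : ℕ) : ℤ) := by omega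
        rw [e1, e2]; exact hq (L + 1 - j') (by omega)
      rw [show t + 1 + (L : ℤ) = (t + 1) + (L : ℤ) by ring,
        show t' + 1 + (L : ℤ) = (t' + 1) + (L : ℤ) by ring, lemF (t + 1), lemF (t' + 1)]
      constructor
      · intro h j' hj' hc
        exact h j' hj' ⟨(key j' hj').mpr hc.1, hc.2⟩
      · intro h j' hj' hc
        exact h j' hj' ⟨(key j' hj').mp hc.1, hc.2⟩
  have stepB : ∀ t t' : ℤ, (∀ j : ℕ, j ≤ L → ((t + j) ∈ C ↔ (t' + j) ∈ C)) →
      ∀ j : ℕ, j ≤ L → ((t - 1 + j) ∈ C ↔ (t' - 1 + j) ∈ C) := by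
    intro t t' hq j hj
    rcases Nat.eq_zero_or_pos j with rfl | hj1
    · have key : ∀ j' ∈ Finset.Icc 1 L,
          (((t - 1) + (j' : ℤ)) ∈ C ↔ ((t' - 1) + (j' : ℤ)) ∈ C) := by
        intro j' hj'
        simp only [Finset.mem_Icc] at hj'
        have e1 : t - 1 + (j' : ℤ) = t + ((j' - 1 : ℕ) : ℤ) := by omega
        have e2 : t' - 1 + (j' : ℤ) = t' + ((j' - 1 : ℕ) : ℤ) := by omega
        rw [e1, e2]; exact hq (j' - 1) (by omega)
      simp only [Nat.cast_zero, add_zero]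
      rw [lemB (t - 1), lemB (t' - 1)]
      constructor
      · intro h j' hj' hc
        exact h j' hj' ⟨(key j' hj').mpr hc.1, hc.2⟩
      · intro h j' hj' hc
        exact h j' hj' ⟨(key j' hj').mp hc.1, hc.2⟩
    · have e1 : t - 1 + (j : ℤ) = t + ((j - 1 : ℕ) : ℤ) := by omega
      have e2 : t' - 1 + (j : ℤ) = t' + ((j - 1 : ℕ) : ℤ) := by omega
      rw [e1, e2]; exact hq (j - 1) (by omega)
  have hQk : ∀ k : ℤ, ∀ j : ℕ, j ≤ L →
      (((u1 : ℤ) + k + j) ∈ C ↔ ((u2 : ℤ) + k + j) ∈ C) := by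
    intro k
    induction k using Int.induction_on with
    | zero => simpa using hwin
    | succ k ih =>
      intro j hj
      have h2 := stepF _ _ ih j hj
      have e1 : (u1 : ℤ) + (k + 1) + j = (u1 : ℤ) + k + 1 + j := by ring
      have e2 : (u2 : ℤ) + (k + 1) + j = (u2 : ℤ) + k + 1 + j := by ring
      rw [e1, e2]; exact h2
    | pred k ih =>
      intro j hj
      have h2 := stepB _ _ ih j hj
      have e1 : (u1 : ℤ) + (-(k : ℤ) - 1) + j = (u1 : ℤ) + -(k : ℤ) - 1 + j := by ring
      have e2 : (u2 : ℤ) + (-(k : ℤ) - 1) + j = (u2 : ℤ) + -(k : ℤ) - 1 + j := by ring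
      rw [e1, e2]; exact h2
  have hper : ∀ z : ℤ, z ∈ C ↔ z + n ∈ C := by
    intro z
    have := hQk (z - u1) 0 (Nat.zero_le L)
    simp only [Nat.cast_zero, add_zero] at this
    have e1 : (u1 : ℤ) + (z - u1) = z := by ring
    have e2 : (u2 : ℤ) + (z - u1) = z + n := by rw [hnc]; ring
    rw [e1, e2] at this
    exact this
  have hmul : ∀ (k : ℤ) (z : ℤ), z ∈ C ↔ z + k * n ∈ C := by
    intro k
    induction k using Int.induction_on with
    | zero => simp
    | succ k ih =>
      intro z
      have := (ih z).trans (hper (z + k * n))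
      have e : z + k * n + n = z + (k + 1) * n := by ring
      rw [e] at this; exact this
    | pred k ih =>
      intro z
      have h3 := hper (z + (-(k : ℤ) - 1) * n)
      rw [show z + (-(k : ℤ) - 1) * (n : ℤ) + (n : ℤ) = z + (-(k : ℤ)) * n by ring] at h3
      exact (ih z).trans h3.symm

  have hmod : ∀ z z' : ℤ, z % n = z' % n → (z ∈ C ↔ z' ∈ C) := by
    intro z z' h
    have hdvd : (n : ℤ) ∣ z' - z := Int.ModEq.dvd h
    obtain ⟨k, hk⟩ := hdvd
    have : z' = z + k * n := by rw [mul_comm] at hk; omega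
    rw [this]; exact hmul k z
  set D : Finset ℕ := Finset.filter (fun d : ℕ => ((d : ℤ) ∈ C)) (Finset.range n) with hD
  refine ⟨n, D, hnpos, ?_⟩
  intro r hr
  rw [Finset.mem_range] at hr
  obtain ⟨⟨a, c⟩, ⟨ha, hc, hsum⟩, hu⟩ := htile (r : ℤ)
  have hn0 : (n : ℤ) ≠ 0 := by exact_mod_cast hnpos.ne'
  have hd0 : 0 ≤ c % n := Int.emod_nonneg c hn0
  have hdn : c % n < n := Int.emod_lt_of_pos c (by exact_mod_cast hnpos)
  set d := (c % n).toNat with hd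
  have hdc : (d : ℤ) = c % n := Int.toNat_of_nonneg hd0
  have hdC : ((d : ℤ)) ∈ C := by
    refine (hmod _ c ?_).mpr hc
    rw [hdc]
    exact Int.emod_emod_of_dvd c dvd_rfl
  have hdD : d ∈ D := by
    rw [hD, Finset.mem_filter, Finset.mem_range]
    exact ⟨by omega, hdC⟩
  have hkey : ∀ q : ℕ × ℕ, (q ∈ A ×ˢ D ∧ (q.1 + q.2) % n = r) → q = (a, d) := by
    rintro ⟨a', d'⟩ ⟨hmem, hmodeq⟩
    rw [Finset.mem_product] at hmem
    obtain ⟨ha', hd'⟩ := hmem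
    rw [hD, Finset.mem_filter, Finset.mem_range] at hd'
    obtain ⟨hd'n, hd'C⟩ := hd'
    -- c' := r - a' is in C
    have hmodZ : ((a' : ℤ) + d') % n = r := by
      have : (((a' + d') % n : ℕ) : ℤ) = (r : ℤ) := by exact_mod_cast congrArg (Nat.cast : ℕ → ℤ) hmodeq
      rwa [Int.natCast_mod, Nat.cast_add] at this
    have hrmod : (r : ℤ) % n = (r : ℤ) := Int.emod_eq_of_lt (by positivity) (by exact_mod_cast hr)
    have hc'C : ((r : ℤ) - a') ∈ C := by
      refine (hmod _ _ ?_).mpr hd'C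
      have h1 : ((r : ℤ) - a') % n = ((a' : ℤ) + d' - a') % n := by
        apply Int.ModEq.sub_right
        rw [Int.ModEq, hmodZ, hrmod]
      rw [h1]
      congr 1; ring
    have := hu ((a' : ℕ), (r : ℤ) - (a' : ℤ)) ⟨ha', hc'C, by ring⟩
    have haa : a' = a := congrArg Prod.fst this
    have hcc : (r : ℤ) - (a' : ℤ) = c := congrArg Prod.snd this
    -- now d' = d
    have hdd : (d' : ℤ) = (d : ℤ) := by
      have h1 : (d' : ℤ) % n = c % n := by
        have : (d' : ℤ) % n = ((a' : ℤ) + d' - a') % n := by congr 1; ring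
        rw [this]
        calc ((a' : ℤ) + d' - a') % n = ((r : ℤ) - a') % n := by
              apply Int.ModEq.sub_right
              rw [Int.ModEq, hmodZ, hrmod]
          _ = c % n := by rw [hcc]
      have h2 : (d' : ℤ) % n = (d' : ℤ) := Int.emod_eq_of_lt (by positivity) (by exact_mod_cast hd'n)
      rw [h2, ← hdc] at h1
      exact h1
    have : d' = d := by exact_mod_cast hdd
    rw [haa, this]
  refine ⟨(a, d), ⟨?_, ?_⟩, hkey⟩
  · rw [Finset.mem_product]; exact ⟨ha, hdD⟩
  · -- (a + d) % n = r
    have h1 : ((a : ℤ) + d) % n = (r : ℤ) := by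
      rw [hdc]
      have : ((a : ℤ) + c % n) % n = ((a : ℤ) + c) % n := by
        apply Int.ModEq.add_left
        exact Int.emod_emod_of_dvd c dvd_rfl
      rw [this, hsum]
      exact Int.emod_eq_of_lt (by positivity) (by exact_mod_cast hr)
    have : (((a + d) % n : ℕ) : ℤ) = (r : ℤ) := by
      rw [Int.natCast_mod, Nat.cast_add]; exact h1
    exact_mod_cast this

theorem tiles_implies_T1 (A : Finset ℕ) (hA : Tiles A)
    (S : Finset ℕ)
    (hS : ∀ s : ℕ, s ∈ S ↔ (IsPrimePow s ∧ cyclotomic s ℤ ∣ setPoly A)) :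
    (A.card : ℤ) = ∏ s ∈ S, (cyclotomic s ℤ).eval 1 := by
  classical
  obtain ⟨n, D, hn, hmod⟩ := exists_modular A hA
  -- card identity
  have hbijcard : A.card * D.card = n := by
    rw [← Finset.card_product, ← Finset.card_range n]
    apply Finset.card_bij (fun q _ => (q.1 + q.2) % n)
    · intro q hq
      exact Finset.mem_range.mpr (Nat.mod_lt _ hn)
    · intro q1 h1 q2 h2 he
      have hr : (q1.1 + q1.2) % n ∈ Finset.range n := Finset.mem_range.mpr (Nat.mod_lt _ hn)
      obtain ⟨q, -, huq⟩ := hmod _ hr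
      exact (huq q1 ⟨h1, rfl⟩).trans (huq q2 ⟨h2, he.symm⟩).symm
    · intro r hr
      obtain ⟨q, ⟨hqm, hqe⟩, -⟩ := hmod r hr
      exact ⟨q, hqm, hqe⟩
  -- polynomial identities
  have hADpoly : setPoly A * setPoly D = ∑ q ∈ A ×ˢ D, (X : Polynomial ℤ) ^ (q.1 + q.2) := by
    rw [setPoly, setPoly, Finset.sum_mul_sum, Finset.sum_product]
    exact Finset.sum_congr rfl fun a _ => Finset.sum_congr rfl fun d _ => (pow_add _ _ _).symm
  have hsum2 : ∑ q ∈ A ×ˢ D, (X : Polynomial ℤ) ^ ((q.1 + q.2) % n)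
      = ∑ r ∈ Finset.range n, (X : Polynomial ℤ) ^ r := by
    apply Finset.sum_bij (fun q _ => (q.1 + q.2) % n)
    · intro q hq
      exact Finset.mem_range.mpr (Nat.mod_lt _ hn)
    · intro q1 h1 q2 h2 he
      have hr : (q1.1 + q1.2) % n ∈ Finset.range n := Finset.mem_range.mpr (Nat.mod_lt _ hn)
      obtain ⟨q, -, huq⟩ := hmod _ hr
      exact (huq q1 ⟨h1, rfl⟩).trans (huq q2 ⟨h2, he.symm⟩).symm
    · intro r hr
      obtain ⟨q, ⟨hqm, hqe⟩, -⟩ := hmod r hr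
      exact ⟨q, hqm, hqe⟩
    · intro q hq; rfl
  have hdvdmod : ((X : Polynomial ℤ) ^ n - 1) ∣
      (setPoly A * setPoly D - ∑ r ∈ Finset.range n, (X : Polynomial ℤ) ^ r) := by
    rw [hADpoly, ← hsum2, ← Finset.sum_sub_distrib]
    apply Finset.dvd_sum
    intro q hq
    set e := q.1 + q.2 with he
    have hcalc : (X : Polynomial ℤ) ^ e - X ^ (e % n)
        = X ^ (e % n) * ((X ^ n) ^ (e / n) - 1) := by
      rw [mul_sub, mul_one, ← pow_mul, ← pow_add]
      congr 2
      exact (Nat.mod_add_div e n).symm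
    rw [hcalc]
    apply Dvd.dvd.mul_left
    have := sub_dvd_pow_sub_pow ((X : Polynomial ℤ) ^ n) 1 (e / n)
    rwa [one_pow] at this
  -- the set of prime-power divisors of n
  set Pn := n.divisors.filter IsPrimePow with hPn
  set SD := n.divisors.filter
      (fun s => IsPrimePow s ∧ cyclotomic s ℤ ∣ setPoly D) with hSD
  have hgeom_dvd : ∀ s ∈ Pn, cyclotomic s ℤ ∣ ∑ r ∈ Finset.range n, (X : Polynomial ℤ) ^ r := by
    intro s hs
    rw [hPn, Finset.mem_filter, Nat.mem_divisors] at hs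
    exact cyclotomic_dvd_geom_sum_of_dvd ℤ hs.1.1 hs.2.one_lt.ne'
  have hXn_dvd : ∀ s ∈ Pn, cyclotomic s ℤ ∣ (X : Polynomial ℤ) ^ n - 1 := by
    intro s hs
    rw [hPn, Finset.mem_filter, Nat.mem_divisors] at hs
    obtain ⟨k, hk⟩ := hs.1.1
    refine (cyclotomic.dvd_X_pow_sub_one s ℤ).trans ?_
    have := sub_dvd_pow_sub_pow ((X : Polynomial ℤ) ^ s) 1 k
    rwa [one_pow, ← pow_mul, ← hk] at this
  have hPn_sub : Pn ⊆ S ∪ SD := by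
    intro s hs
    have hspp : IsPrimePow s := (Finset.mem_filter.mp hs).2
    have hsub : cyclotomic s ℤ ∣ setPoly A * setPoly D := by
      have h1 : cyclotomic s ℤ ∣
          (setPoly A * setPoly D - ∑ r ∈ Finset.range n, (X : Polynomial ℤ) ^ r) :=
        (hXn_dvd s hs).trans hdvdmod
      have := dvd_add h1 (hgeom_dvd s hs)
      rwa [sub_add_cancel] at this
    rcases (cycl_prime hspp).dvd_mul.mp hsub with h | h
    · exact Finset.mem_union_left _ ((hS s).mpr ⟨hspp, h⟩)
    · refine Finset.mem_union_right _ ?_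
      rw [hSD, Finset.mem_filter]
      exact ⟨(Finset.mem_filter.mp hs).1, hspp, h⟩
  -- evaluations at 1
  set f : ℕ → ℤ := fun s => (cyclotomic s ℤ).eval 1 with hf
  have h_n_eq : ∏ s ∈ Pn, f s = (n : ℤ) := by
    have hprod := congrArg (eval 1) (prod_cyclotomic_eq_geom_sum hn ℤ)
    rw [eval_prod, eval_geom_sum] at hprod
    simp only [one_pow, Finset.sum_const, Finset.card_range, nsmul_eq_mul, mul_one] at hprod
    have hsplit := Finset.prod_filter_mul_prod_filter_not (n.divisors.erase 1) IsPrimePow f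
    have hfe : (n.divisors.erase 1).filter IsPrimePow = Pn := by
      rw [hPn]
      ext s
      simp only [Finset.mem_filter, Finset.mem_erase]
      constructor
      · rintro ⟨⟨-, h1⟩, h2⟩; exact ⟨h1, h2⟩
      · rintro ⟨h1, h2⟩; exact ⟨⟨h2.ne_one, h1⟩, h2⟩
    have hone : ∏ s ∈ (n.divisors.erase 1).filter (fun s => ¬IsPrimePow s), f s = 1 := by
      apply Finset.prod_eq_one
      intro s hs
      simp only [Finset.mem_filter, Finset.mem_erase] at hs
      rw [hf]
      apply eval_one_cyclotomic_not_prime_pow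
      intro p hp k hk
      rcases Nat.eq_zero_or_pos k with rfl | hk0
      · exact hs.1.1 (by simpa using hk.symm)
      · exact hs.2 ⟨p, k, hp.prime, hk0, hk⟩
    rw [hfe, hone, mul_one] at hsplit
    rw [hsplit, hprod]
  have h_u_dvd : ∏ s ∈ S, f s ∣ (A.card : ℤ) := by
    have hd : (∏ s ∈ S, cyclotomic s ℤ) ∣ setPoly A :=
      cyclo_prod_dvd S _ (fun s hs => ((hS s).mp hs).1) (fun s hs => ((hS s).mp hs).2)
    have := eval_dvd (x := (1 : ℤ)) hd
    rwa [eval_prod, eval_one_setPoly] at this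
  have h_v_dvd : ∏ s ∈ SD, f s ∣ (D.card : ℤ) := by
    have hd : (∏ s ∈ SD, cyclotomic s ℤ) ∣ setPoly D := by
      apply cyclo_prod_dvd
      · intro s hs; exact ((Finset.mem_filter.mp hs).2).1
      · intro s hs; exact ((Finset.mem_filter.mp hs).2).2
    have := eval_dvd (x := (1 : ℤ)) hd
    rwa [eval_prod, eval_one_setPoly] at this
  have hppS : ∀ s ∈ S, IsPrimePow s := fun s hs => ((hS s).mp hs).1
  have hppSD : ∀ s ∈ SD, IsPrimePow s := fun s hs => ((Finset.mem_filter.mp hs).2).1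
  have hupos : 0 < ∏ s ∈ S, f s := Finset.prod_pos fun s hs => eval_one_primePow_pos (hppS s hs)
  have hvpos : 0 < ∏ s ∈ SD, f s := Finset.prod_pos fun s hs => eval_one_primePow_pos (hppSD s hs)
  -- the divisibility chain
  have h1 : (n : ℤ) ∣ ∏ s ∈ S ∪ SD, f s := by
    rw [← h_n_eq]
    exact Finset.prod_dvd_prod_of_subset _ _ f hPn_sub
  have h2 : ∏ s ∈ S ∪ SD, f s ∣ (∏ s ∈ S, f s) * ∏ s ∈ SD, f s :=
    ⟨∏ s ∈ S ∩ SD, f s, (Finset.prod_union_inter).symm⟩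
  have h3 : (∏ s ∈ S, f s) * ∏ s ∈ SD, f s ∣ (A.card : ℤ) * D.card :=
    mul_dvd_mul h_u_dvd h_v_dvd
  have hcardn : (A.card : ℤ) * D.card = (n : ℤ) := by exact_mod_cast hbijcard
  have huvn : (∏ s ∈ S, f s) * ∏ s ∈ SD, f s = (n : ℤ) := by
    apply Int.dvd_antisymm (by positivity) (by positivity)
    · rw [← hcardn]; exact h3
    · exact h1.trans h2
  obtain ⟨x, hx⟩ := h_u_dvd
  obtain ⟨y, hy⟩ := h_v_dvd
  have hAcardpos : (0 : ℤ) < A.card := by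
    rcases Nat.eq_zero_or_pos A.card with h | h
    · exfalso; rw [h] at hbijcard; omega
    · exact_mod_cast h
  have hxpos : 0 < x := by
    by_contra hx0
    push_neg at hx0
    nlinarith [hx, hupos, hAcardpos]
  have hxy : x * y = 1 := by
    have : (n : ℤ) * (x * y) = (n : ℤ) * 1 := by
      calc (n : ℤ) * (x * y) = ((∏ s ∈ S, f s) * x) * ((∏ s ∈ SD, f s) * y) := by
            rw [← huvn]; ring
        _ = (A.card : ℤ) * D.card := by rw [← hx, ← hy]
        _ = (n : ℤ) := hcardn
        _ = (n : ℤ) * 1 := (mul_one _).symm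
    exact mul_left_cancel₀ (by exact_mod_cast hn.ne') this
  have hx1 : x = 1 := Int.eq_one_of_dvd_one hxpos.le ⟨y, hxy.symm⟩
  rw [hx, hx1, mul_one]
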